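/- arXiv:1305.2377 — 3 statements merged into one kernel-verified Lean document; each statement's English description precedes it below -/
import Mathlib

section
/- Let α and α' be two A-connections on an R-Lie algebra L taking values in Der_D(L), such that α' − α = ad_φ for some φ ∈ Ω_A¹(L). Then for every η ∈ Ω_A^p(L) one has d_{α'} η − d_α η = [φ, η], where [·,·] is the shuffle-bracket on L-valued A-forms. -/
/-- The order-preserving inclusion `Fin (n-1) → Fin n` skipping the index `j`. -/
def skipIdx {n : ℕ} (j : Fin n) (m : Fin (n - 1)) : Fin n :=
  if (m : ℕ) < (j : ℕ) then ⟨m, by have := m.isLt; omega⟩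
  else ⟨(m : ℕ) + 1, by have := m.isLt; omega⟩

/-- The Chevalley–Eilenberg/de Rham differential of an `M`-valued `p`-form on a Lie
algebroid `A`, twisted by a connection `α : A → (M → M)`. -/
def dform {A M : Type*} [LieRing A] [AddCommGroup M]
    (α : A → M → M) (p : ℕ) (ξ : (Fin p → A) → M) :
    (Fin (p + 1) → A) → M :=
  fun s =>
    (∑ i : Fin (p + 1), ((-1 : ℤ) ^ (i : ℕ)) • α (s i) (ξ (s ∘ i.succAbove))) +
      ∑ i : Fin (p + 1), ∑ j : Fin p,
        if (i : ℕ) ≤ (j : ℕ) then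
          ((-1 : ℤ) ^ ((i : ℕ) + (j : ℕ) + 1)) •
            ξ (fun m : Fin p =>
              if hm : (m : ℕ) = 0 then ⁅s i, s (i.succAbove j)⁆
              else s (i.succAbove (skipIdx j ⟨(m : ℕ) - 1, by have := m.isLt; omega⟩)))
        else 0

/-- If `α, α' : A → Der_D(L)` are two `A`-connections on the `R`-Lie
algebra `L` with `α' − α = ad_φ` for a 1-form `φ ∈ Ω_A¹(L)`, then for every
`η ∈ Ω_A^p(L)` one has `d_{α'} η − d_α η = [φ, η]`, where
`[φ,η](b₁,…,b_{p+1}) = Σᵢ (−1)^{i−1} ⁅φ(bᵢ), η(b₁,…,b̂ᵢ,…,b_{p+1})⁆`. -/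
theorem dform_change_of_connection
    {k : Type*} [Field k] {R : Type*} [CommRing R] [Algebra k R]
    {A : Type*} [LieRing A] [LieAlgebra k A] [Module R A] [IsScalarTower k R A]
    {L : Type*} [LieRing L] [LieAlgebra k L] [LieAlgebra R L] [IsScalarTower k R L]
    (a : A →ₗ[R] Derivation k R R)
    (hLeibA : ∀ (s t : A) (f : R), ⁅s, f • t⁆ = f • ⁅s, t⁆ + a s f • t)
    (α α' : A → L →ₗ[k] L)
    (hαD : ∀ (b : A) (l l' : L), α b ⁅l, l'⁆ = ⁅α b l, l'⁆ + ⁅l, α b l'⁆)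
    (hα'D : ∀ (b : A) (l l' : L), α' b ⁅l, l'⁆ = ⁅α' b l, l'⁆ + ⁅l, α' b l'⁆)
    (hαLeib : ∀ (b : A) (f : R) (l : L), α b (f • l) = f • α b l + a b f • l)
    (hα'Leib : ∀ (b : A) (f : R) (l : L), α' b (f • l) = f • α' b l + a b f • l)
    (φ : A →ₗ[R] L)
    (hφ : ∀ (b : A) (l : L), α' b l = α b l + ⁅φ b, l⁆) :
    ∀ (p : ℕ) (η : A [⋀^Fin p]→ₗ[R] L) (s : Fin (p + 1) → A),
      dform (fun b l => α' b l) p ⇑η s - dform (fun b l => α b l) p ⇑η s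
        = ∑ i : Fin (p + 1), ((-1 : ℤ) ^ (i : ℕ)) • ⁅φ (s i), η (s ∘ i.succAbove)⁆ := by
  intro p η s
  unfold dform
  rw [add_sub_add_comm, sub_self, add_zero, ← Finset.sum_sub_distrib]
  refine Finset.sum_congr rfl fun i _ => ?_
  simp only [← smul_sub]; rw [hφ, add_sub_cancel_left]
end

section
/- Let 0 → L → A → B → 0 be an extension of Lie-Rinehart algebras with B projective over R, and s: B → A an R-linear splitting. Define α_s(b)(l) = [s(b), l] and ρ_s(b₁,b₂) = [s(b₁),s(b₂)] − s([b₁,b₂]). Then (α_s, ρ_s) is a lifting pair of the induced coupling ᾱ, i.e., ad_{ρ_s} = F_{α_s}, and moreover d_{α_s} ρ_s = 0. -/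
/-- Let `0 → L → A → B → 0` be an extension of `(k,R)`-Lie–Rinehart
algebras with `B` projective over `R`, and `s : B → A` an `R`-linear splitting.
Define `α_s(b)(l) = ⁅s b, l⁆` and `ρ_s(b₁,b₂) = ⁅s b₁, s b₂⁆ − s ⁅b₁,b₂⁆`.  Then
`(α_s, ρ_s)` is a lifting pair of the induced coupling `ᾱ` — in particular `α_s` and
`ρ_s` take values in (the image of) `L` and `ad_{ρ_s} = F_{α_s}` — and moreover
`d_{α_s} ρ_s = 0`.  (All identities are stated inside `A` via the injection `ι`.) -/
theorem splitting_gives_flat_lifting_pair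
    {k : Type*} [Field k] {R : Type*} [CommRing R] [Algebra k R]
    {A : Type*} [LieRing A] [LieAlgebra k A] [Module R A] [IsScalarTower k R A]
    {B : Type*} [LieRing B] [LieAlgebra k B] [Module R B] [IsScalarTower k R B]
    [Module.Projective R B]
    {L : Type*} [LieRing L] [LieAlgebra k L] [LieAlgebra R L] [IsScalarTower k R L]
    (aA : A →ₗ[R] Derivation k R R) (aB : B →ₗ[R] Derivation k R R)
    (hLeibA : ∀ (x y : A) (f : R), ⁅x, f • y⁆ = f • ⁅x, y⁆ + aA x f • y)
    (hLeibB : ∀ (x y : B) (f : R), ⁅x, f • y⁆ = f • ⁅x, y⁆ + aB x f • y)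
    (ι : L →ₗ[R] A) (π : A →ₗ[R] B)
    (hι : Function.Injective ι) (hπ : Function.Surjective π)
    (hιbr : ∀ l l' : L, ι ⁅l, l'⁆ = ⁅ι l, ι l'⁆)
    (hπbr : ∀ x y : A, π ⁅x, y⁆ = ⁅π x, π y⁆)
    (hπa : ∀ x : A, aA x = aB (π x))
    (hexact : LinearMap.range ι = LinearMap.ker π)
    (s : B →ₗ[R] A) (hs : ∀ b : B, π (s b) = b) :
    ∀ ρA : B → B → A, ρA = (fun b₁ b₂ => ⁅s b₁, s b₂⁆ - s ⁅b₁, b₂⁆) →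
      -- `α_s` is well defined: `⁅s b, ι l⁆` lies in the image of `L`
      (∀ (b : B) (l : L), ⁅s b, ι l⁆ ∈ LinearMap.range ι) ∧
      -- `ρ_s` takes values in the image of `L`
      (∀ b₁ b₂ : B, ρA b₁ b₂ ∈ LinearMap.range ι) ∧
      -- `ad_{ρ_s} = F_{α_s}`, i.e. `(α_s, ρ_s)` is a lifting pair of `ᾱ`
      (∀ (b₁ b₂ : B) (l : L),
        ⁅s b₁, ⁅s b₂, ι l⁆⁆ - ⁅s b₂, ⁅s b₁, ι l⁆⁆ - ⁅s ⁅b₁, b₂⁆, ι l⁆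
          = ⁅ρA b₁ b₂, ι l⁆) ∧
      -- `d_{α_s} ρ_s = 0`
      (∀ b₁ b₂ b₃ : B,
        ⁅s b₁, ρA b₂ b₃⁆ - ⁅s b₂, ρA b₁ b₃⁆ + ⁅s b₃, ρA b₁ b₂⁆
          - ρA ⁅b₁, b₂⁆ b₃ + ρA ⁅b₁, b₃⁆ b₂ - ρA ⁅b₂, b₃⁆ b₁ = 0) := by

  intro ρA hρ
  subst hρ
  have hπι : ∀ l : L, π (ι l) = 0 := fun l => by
    have : ι l ∈ LinearMap.ker π := hexact ▸ LinearMap.mem_range_self ι l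
    exact this
  refine ⟨?_, ?_, ?_, ?_⟩
  · intro b l
    rw [hexact, LinearMap.mem_ker, hπbr, hs, hπι, lie_zero]
  · intro b₁ b₂
    rw [hexact, LinearMap.mem_ker, map_sub, hπbr, hs, hs, hs, sub_self]
  · intro b₁ b₂ l
    simp only [sub_lie]
    rw [show ⁅⁅s b₁, s b₂⁆, ι l⁆ = ⁅s b₁, ⁅s b₂, ι l⁆⁆ - ⁅s b₂, ⁅s b₁, ι l⁆⁆ from
      lie_lie _ _ _]
  · intro b₁ b₂ b₃
    simp only [lie_sub, sub_lie, map_sub]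
    have j : ⁅s b₁, ⁅s b₂, s b₃⁆⁆
        = -⁅s b₃, ⁅s b₁, s b₂⁆⁆ + ⁅s b₂, ⁅s b₁, s b₃⁆⁆ := by
      rw [leibniz_lie (s b₁) (s b₂) (s b₃), ← lie_skew ⁅s b₁, s b₂⁆ (s b₃)]
    have jB : s ⁅⁅b₁, b₂⁆, b₃⁆ = s ⁅b₁, ⁅b₂, b₃⁆⁆ - s ⁅b₂, ⁅b₁, b₃⁆⁆ := by
      rw [lie_lie, map_sub]
    have jB2 : s ⁅⁅b₁, b₃⁆, b₂⁆ = -s ⁅b₂, ⁅b₁, b₃⁆⁆ := by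
      rw [← lie_skew ⁅b₁, b₃⁆ b₂, map_neg]
    have jB3 : s ⁅⁅b₂, b₃⁆, b₁⁆ = -s ⁅b₁, ⁅b₂, b₃⁆⁆ := by
      rw [← lie_skew ⁅b₂, b₃⁆ b₁, map_neg]
    have k1 : ⁅s b₃, s ⁅b₁, b₂⁆⁆ = -⁅s ⁅b₁, b₂⁆, s b₃⁆ := (lie_skew _ _).symm
    have k2 : ⁅s b₂, s ⁅b₁, b₃⁆⁆ = -⁅s ⁅b₁, b₃⁆, s b₂⁆ := (lie_skew _ _).symm
    have k3 : ⁅s b₁, s ⁅b₂, b₃⁆⁆ = -⁅s ⁅b₂, b₃⁆, s b₁⁆ := (lie_skew _ _).symm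
    rw [j, jB, jB2, jB3, k1, k2, k3]
    abel
end

section
/- Let L ⊆ A be Lie-Rinehart algebras with L an ideal with zero anchor, and let F^p Ω_A^• be the filtration by forms annihilated by q−p+1 contractions with elements of L. Then the filtration is preserved by the de Rham differential: d_A(F^p Ω_A^q) ⊆ F^p Ω_A^{q+1}. -/
open scoped Classical in
/-- Membership in the filtration `F^p Ω_A^n`: the `n`-form `ξ` vanishes whenever at
least `n − p + 1` of its arguments lie in `L` (i.e. it is annihilated by contraction
with `n − p + 1` elements of `L`). -/
def FmemFil {A M : Type*} [AddCommGroup M] (L : Set A) (p n : ℕ)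
    (ξ : (Fin n → A) → M) : Prop :=
  ∀ v : Fin n → A,
    n - p + 1 ≤ (Finset.univ.filter fun i => v i ∈ L).card → ξ v = 0

lemma succAbove_val' {n : ℕ} (i : Fin (n+1)) (m : Fin n) :
    ((i.succAbove m) : ℕ) = if (m:ℕ) < (i:ℕ) then (m:ℕ) else (m:ℕ)+1 := by
  rw [Fin.succAbove]
  split_ifs with h1 h2 h2 <;> simp_all [Fin.lt_def]

lemma skipIdx_val' {n : ℕ} (j : Fin n) (m : Fin (n-1)) :
    ((skipIdx j m : Fin n) : ℕ) = if (m:ℕ) < (j:ℕ) then (m:ℕ) else (m:ℕ)+1 := by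
  unfold skipIdx; split <;> rfl

lemma skipIdx_injective' {n : ℕ} (j : Fin n) : Function.Injective (skipIdx j) := by
  intro x y h
  have h2 := congrArg (Fin.val) h
  rw [skipIdx_val', skipIdx_val'] at h2
  apply Fin.ext
  split_ifs at h2 <;> omega

lemma skipIdx_ne' {n : ℕ} (j : Fin n) (m : Fin (n-1)) : skipIdx j m ≠ j := by
  intro h; have h2 := congrArg Fin.val h; rw [skipIdx_val'] at h2
  split_ifs at h2 <;> omega

lemma skipIdx_surj' {n : ℕ} (j u : Fin n) (h : u ≠ j) : ∃ m, skipIdx j m = u := by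
  have hj := j.isLt; have hu := u.isLt
  have hne : (u:ℕ) ≠ (j:ℕ) := fun hh => h (Fin.ext hh)
  by_cases hlt : (u:ℕ) < (j:ℕ)
  · exact ⟨⟨u, by omega⟩, Fin.ext (by rw [skipIdx_val']; simp [hlt])⟩
  · refine ⟨⟨(u:ℕ)-1, by omega⟩, Fin.ext ?_⟩
    rw [skipIdx_val']
    simp only [Fin.val_mk]
    have hng : ¬ ((u:ℕ)-1 < (j:ℕ)) := by omega
    rw [if_neg hng]; omega

lemma card_le_of_surj' {n m : ℕ} (P : Fin n → Prop) (Q : Fin m → Prop)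
    [DecidablePred P] [DecidablePred Q] (G : Fin m → Fin n)
    (hG : Function.Injective G)
    (hsurj : ∀ t, P t → ∃ s, Q s ∧ G s = t) :
    (Finset.univ.filter P).card ≤ (Finset.univ.filter Q).card := by
  have hsub : Finset.univ.filter P ⊆ (Finset.univ.filter Q).image G := by
    intro t ht
    rw [Finset.mem_filter] at ht
    obtain ⟨s, hQ, hGs⟩ := hsurj t ht.2
    exact Finset.mem_image.mpr ⟨s, Finset.mem_filter.mpr ⟨Finset.mem_univ _, hQ⟩, hGs⟩
  calc (Finset.univ.filter P).card ≤ _ := Finset.card_le_card hsub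
    _ = (Finset.univ.filter Q).card := Finset.card_image_of_injective _ hG

/-- Let `A` be a `(k,R)`-Lie–Rinehart algebra and `L ⊆ A` a Lie ideal
contained in the kernel of the anchor.  Then the de Rham differential preserves the
filtration: `d_A(F^p Ω_A^q) ⊆ F^p Ω_A^{q+1}`. -/
theorem dform_preserves_filtration
    {k : Type*} [Field k] {R : Type*} [CommRing R] [Algebra k R]
    {A : Type*} [LieRing A] [LieAlgebra k A] [Module R A] [IsScalarTower k R A]
    (a : A →ₗ[R] Derivation k R R)
    (hLeib : ∀ (s t : A) (f : R), ⁅s, f • t⁆ = f • ⁅s, t⁆ + a s f • t)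
    (L : Submodule R A)
    (hIdeal : ∀ (x : A), ∀ l ∈ L, ⁅x, l⁆ ∈ L)
    (hAnchor : ∀ l ∈ L, a l = 0)
    (p q : ℕ) (ξ : A [⋀^Fin q]→ₗ[R] R)
    (hξ : FmemFil (L : Set A) p q ⇑ξ) :
    FmemFil (L : Set A) p (q + 1) (dform (fun s f => a s f) q ⇑ξ) := by
  classical
  intro v hcard
  simp only [dform]
  rw [Finset.sum_eq_zero, Finset.sum_eq_zero, add_zero]
  · -- second (double) sum
    intro i _
    rw [Finset.sum_eq_zero]
    intro j _
    by_cases hij : (i:ℕ) ≤ (j:ℕ)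
    · rw [if_pos hij]
      refine smul_eq_zero_of_right _ (hξ _ ?_)
      -- counting
      set W : Fin q → A := fun m : Fin q =>
        if hm : (m : ℕ) = 0 then ⁅v i, v (i.succAbove j)⁆
        else v (i.succAbove (skipIdx j ⟨(m : ℕ) - 1, by have := m.isLt; omega⟩)) with hWdef
      show q - p + 1 ≤ (Finset.univ.filter fun m => W m ∈ (L : Set A)).card
      have hq : 0 < q := j.pos
      set G : Fin q → Fin (q+1) := fun m =>
        if hm : (m : ℕ) = 0 then i.succAbove j
        else i.succAbove (skipIdx j ⟨(m : ℕ) - 1, by have := m.isLt; omega⟩) with hGdef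
      have hGinj : Function.Injective G := by
        intro x y h
        by_cases hx : (x:ℕ) = 0 <;> by_cases hy : (y:ℕ) = 0
        · exact Fin.ext (hx.trans hy.symm)
        · rw [hGdef] at h; simp only [dif_pos hx, dif_neg hy] at h
          exact absurd (Fin.succAbove_right_injective h).symm (skipIdx_ne' j _)
        · rw [hGdef] at h; simp only [dif_neg hx, dif_pos hy] at h
          exact absurd (Fin.succAbove_right_injective h) (skipIdx_ne' j _)
        · rw [hGdef] at h; simp only [dif_neg hx, dif_neg hy] at h
          have h2 := skipIdx_injective' j (Fin.succAbove_right_injective h)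
          have h3 := congrArg Fin.val h2
          simp only [Fin.val_mk] at h3
          exact Fin.ext (by omega)
      have hsurj : ∀ t, (v t ∈ (L : Set A) ∧ t ≠ i) →
          ∃ s, (W s ∈ (L : Set A)) ∧ G s = t := by
        rintro t ⟨htL, hti⟩
        obtain ⟨u, hu⟩ := Fin.exists_succAbove_eq hti
        by_cases huj : u = j
        · refine ⟨⟨0, hq⟩, ?_, ?_⟩
          · show W ⟨0, hq⟩ ∈ (L : Set A)
            rw [hWdef]; simp only [dif_pos rfl]
            apply hIdeal
            rw [huj] at hu; rw [hu]; exact htL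
          · rw [hGdef]; simp only [dif_pos rfl]
            rw [huj] at hu; exact hu
        · obtain ⟨m, hm⟩ := skipIdx_surj' j u huj
          have hmlt : (m:ℕ) + 1 < q := by have := m.isLt; omega
          refine ⟨⟨(m:ℕ)+1, hmlt⟩, ?_, ?_⟩
          · show W ⟨(m:ℕ)+1, hmlt⟩ ∈ (L : Set A)
            rw [hWdef]
            simp only [Fin.val_mk]
            rw [dif_neg (by omega : ¬ ((m:ℕ)+1 = 0))]
            have he : (⟨(m:ℕ)+1-1, by omega⟩ : Fin (q-1)) = m := Fin.ext (by simp)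
            rw [he, hm, hu]; exact htL
          · rw [hGdef]
            simp only [Fin.val_mk]
            rw [dif_neg (by omega : ¬ ((m:ℕ)+1 = 0))]
            have he : (⟨(m:ℕ)+1-1, by omega⟩ : Fin (q-1)) = m := Fin.ext (by simp)
            rw [he, hm, hu]
      have hA := card_le_of_surj' (fun t => v t ∈ (L : Set A) ∧ t ≠ i)
        (fun m => W m ∈ (L : Set A)) G hGinj hsurj
      have hB : (Finset.univ.filter fun t => v t ∈ (L : Set A)).card ≤
          (Finset.univ.filter fun t => v t ∈ (L : Set A) ∧ t ≠ i).card + 1 := by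
        have hsub : (Finset.univ.filter fun t => v t ∈ (L : Set A)) ⊆
            insert i (Finset.univ.filter fun t => v t ∈ (L : Set A) ∧ t ≠ i) := by
          intro t ht
          rw [Finset.mem_filter] at ht
          by_cases h : t = i
          · rw [h]; exact Finset.mem_insert_self _ _
          · exact Finset.mem_insert_of_mem
              (Finset.mem_filter.mpr ⟨Finset.mem_univ _, ht.2, h⟩)
        calc (Finset.univ.filter fun t => v t ∈ (L : Set A)).card
            ≤ _ := Finset.card_le_card hsub
          _ ≤ _ + 1 := Finset.card_insert_le _ _
      by_cases hvi : v i ∈ L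
      · have h0 : (⟨0, hq⟩ : Fin q) ∈ Finset.univ.filter fun m => W m ∈ (L : Set A) := by
          rw [Finset.mem_filter]
          refine ⟨Finset.mem_univ _, ?_⟩
          show W ⟨0, hq⟩ ∈ (L : Set A)
          rw [hWdef]; simp only [dif_pos rfl]
          rw [← lie_skew]
          exact neg_mem (hIdeal _ _ hvi)
        have hcw : 1 ≤ (Finset.univ.filter fun m => W m ∈ (L : Set A)).card :=
          Finset.card_pos.mpr ⟨_, h0⟩
        omega
      · have hB' : (Finset.univ.filter fun t => v t ∈ (L : Set A)).card ≤
            (Finset.univ.filter fun t => v t ∈ (L : Set A) ∧ t ≠ i).card := by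
          apply Finset.card_le_card
          intro t ht
          rw [Finset.mem_filter] at ht ⊢
          refine ⟨ht.1, ht.2, ?_⟩
          intro h; rw [h] at ht; exact hvi ht.2
        omega
    · rw [if_neg hij]
  · -- first sum
    intro i _
    by_cases hvi : v i ∈ L
    · rw [hAnchor _ hvi]; simp
    · have hc : q - p + 1 ≤
          (Finset.univ.filter fun m : Fin q => (v ∘ i.succAbove) m ∈ (L : Set A)).card := by
        have hA := card_le_of_surj' (fun t => v t ∈ (L : Set A))
          (fun m : Fin q => (v ∘ i.succAbove) m ∈ (L : Set A)) i.succAbove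
          Fin.succAbove_right_injective ?_
        · omega
        · intro t ht
          have hti : t ≠ i := fun h => hvi (h ▸ ht)
          obtain ⟨u, hu⟩ := Fin.exists_succAbove_eq hti
          exact ⟨u, by show v (i.succAbove u) ∈ (L:Set A); rw [hu]; exact ht, hu⟩
      rw [hξ _ hc, map_zero, smul_zero]
end
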